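/- Let π avoid 2143, 3142, and 4132, and suppose π contains an occurrence of 132 at positions x < y < z. Then x is a leading maximum of π, i.e., π(1) < π(2) < … < π(x). -/

import Mathlib

/-- A pattern `τ` (a word on `Fin k`) occurs in the permutation `π` of length `n`. -/
def Contains {k n : ℕ} (τ : Fin k → Fin k) (π : Equiv.Perm (Fin n)) : Prop :=
  ∃ f : Fin k → Fin n, StrictMono f ∧ ∀ i j : Fin k, τ i < τ j ↔ π (f i) < π (f j)

/-- The permutation `π` avoids the pattern `τ`. -/
def Avoids {k n : ℕ} (τ : Fin k → Fin k) (π : Equiv.Perm (Fin n)) : Prop :=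
  ¬ Contains τ π

def pat132 : Fin 3 → Fin 3 := ![0, 2, 1]
def pat2143 : Fin 4 → Fin 4 := ![1, 0, 3, 2]
def pat3142 : Fin 4 → Fin 4 := ![2, 0, 3, 1]
def pat4132 : Fin 4 → Fin 4 := ![3, 0, 2, 1]
def pat2413 : Fin 4 → Fin 4 := ![1, 3, 0, 2]
def pat263514 : Fin 6 → Fin 6 := ![1, 5, 2, 4, 0, 3]

/-- `i` is a left-to-right maximum of `π`. -/
def IsLRMax {n : ℕ} (π : Equiv.Perm (Fin n)) (i : Fin n) : Prop :=
  ∀ j, j < i → π j < π i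

/-- `i` is a leading maximum of `π`: all positions up to `i` are LR-maxima. -/
def IsLeadingMax {n : ℕ} (π : Equiv.Perm (Fin n)) (i : Fin n) : Prop :=
  ∀ j, j ≤ i → IsLRMax π j

/-- `ℓ(π)`, the number of leading maxima of `π`. -/
noncomputable def numLeading {n : ℕ} (π : Equiv.Perm (Fin n)) : ℕ :=
  Set.ncard {i : Fin n | IsLeadingMax π i}



def emb4 {n : ℕ} (p q y z : Fin n) : Fin 4 → Fin n :=
  fun i => if i.val = 0 then p else if i.val = 1 then q else if i.val = 2 then y else z

lemma keylem {n : ℕ} (π : Equiv.Perm (Fin n))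
    (h2143 : Avoids pat2143 π) (h3142 : Avoids pat3142 π) (h4132 : Avoids pat4132 π)
    (p q y z : Fin n) (hpq : p < q) (hqy : q < y) (hyz : y < z)
    (hqp : π q < π p) (hqz : π q < π z) (hzy : π z < π y) : False := by
  have hf := @emb4 n p q y z
  have hmono : StrictMono (emb4 p q y z) := by
    intro i j hij
    have hij' : i.val < j.val := hij
    fin_cases i <;> fin_cases j <;> revert hij' <;> norm_num [emb4] <;>
      first
        | exact hpq
        | exact hqy
        | exact hyz
        | exact hpq.trans hqy
        | exact hqy.trans hyz
        | exact (hpq.trans hqy).trans hyz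
  simp only [Fin.lt_def] at hqp hqz hzy
  rcases lt_trichotomy (π p) (π z) with h1 | h1 | h1
  · apply h2143
    refine ⟨emb4 p q y z, hmono, ?_⟩
    simp only [Fin.lt_def] at h1
    intro i j
    fin_cases i <;> fin_cases j <;> norm_num [emb4, pat2143] <;> try (simp only [Fin.lt_def, Fin.le_def, Fin.ext_iff, show ((0:Fin 4):ℕ)=0 from rfl, show ((1:Fin 4):ℕ)=1 from rfl, show ((2:Fin 4):ℕ)=2 from rfl, show ((3:Fin 4):ℕ)=3 from rfl]; omega)
  · have : p = z := π.injective h1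
    subst this
    exact absurd ((hpq.trans hqy).trans hyz) (lt_irrefl _)
  · simp only [Fin.lt_def] at h1
    rcases lt_trichotomy (π p).val (π y).val with h2 | h2 | h2
    · apply h3142
      refine ⟨emb4 p q y z, hmono, ?_⟩
      intro i j
      fin_cases i <;> fin_cases j <;> norm_num [emb4, pat3142] <;> try (simp only [Fin.lt_def, Fin.le_def, Fin.ext_iff, show ((0:Fin 4):ℕ)=0 from rfl, show ((1:Fin 4):ℕ)=1 from rfl, show ((2:Fin 4):ℕ)=2 from rfl, show ((3:Fin 4):ℕ)=3 from rfl]; omega)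
    · have : π p = π y := Fin.ext h2
      have : p = y := π.injective this
      subst this
      exact absurd (hpq.trans hqy) (lt_irrefl _)
    · apply h4132
      refine ⟨emb4 p q y z, hmono, ?_⟩
      intro i j
      fin_cases i <;> fin_cases j <;> norm_num [emb4, pat4132] <;> try (simp only [Fin.lt_def, Fin.le_def, Fin.ext_iff, show ((0:Fin 4):ℕ)=0 from rfl, show ((1:Fin 4):ℕ)=1 from rfl, show ((2:Fin 4):ℕ)=2 from rfl, show ((3:Fin 4):ℕ)=3 from rfl]; omega)

theorem stmt5 {n : ℕ} (π : Equiv.Perm (Fin n))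
    (h2143 : Avoids pat2143 π) (h3142 : Avoids pat3142 π) (h4132 : Avoids pat4132 π)
    (x y z : Fin n) (hxy : x < y) (hyz : y < z)
    (hocc : π x < π z ∧ π z < π y) :
    IsLeadingMax π x := by
  obtain ⟨hxz, hzy⟩ := hocc
  by_contra h
  simp only [IsLeadingMax, IsLRMax, not_forall] at h
  obtain ⟨j, hjx, i, hij, hnlt⟩ := h
  have hji : π j < π i := by
    rcases lt_trichotomy (π i) (π j) with h1 | h1 | h1
    · exact absurd h1 hnlt
    · exact absurd (π.injective h1) (ne_of_lt hij)
    · exact h1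
  rcases eq_or_lt_of_le hjx with rfl | hjx'
  · exact keylem π h2143 h3142 h4132 i j y z hij hxy hyz hji hxz hzy
  · rcases lt_or_gt_of_ne (fun he : π j = π x => (ne_of_lt hjx') (π.injective he)) with h2 | h2
    · exact keylem π h2143 h3142 h4132 i j y z hij (hjx'.trans hxy) hyz hji (h2.trans hxz) hzy
    · exact keylem π h2143 h3142 h4132 j x y z hjx' hxy hyz h2 hxz hzy
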